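/- (Restricted self-convolution of the half-integer Matérn temporal kernel.) Let p ∈ ℕ, l > 0, and define k_T(t) = exp(−√(2p+1)·t/l)·(p!/(2p)!)·Σ_{k=0}^{p} ((p+k)!/(k!·(p−k)!))·(2√(2p+1)·t/l)^{p−k} for t ≥ 0. Let t₀, t_i, t_j ∈ ℝ with t₀ ≥ t_i and t₀ ≥ t_j. For 0 ≤ k₁, k₂ ≤ p define the polynomial P(t) = t^{p−k₁}·(t − t_j + t_i)^{p−k₂}, the constant C_{k₁k₂} = (p!/(2p)!)²·((p+k₁)!·(p+k₂)!)/(k₁!·k₂!·(p−k₁)!·(p−k₂)!)·(2√(2p+1)/l)^{2p−k₁−k₂−1}, and P_{k₁k₂}(t₀, t_i, t_j) = Σ_{k₃=0}^{2p−k₁−k₂} (l/(2√(2p+1)))^{k₃}·P^{(k₃)}(t₀ − t_i), where P^{(k)} denotes the k-th derivative of P. Then ∫_{t₀−t_i}^{+∞} k_T(t)·k_T(t + t_i − t_j) dt = Σ_{k₁=0}^{p} Σ_{k₂=0}^{p} C_{k₁k₂}·exp(−√(2p+1)·(2t₀ − t_i − t_j)/l)·P_{k₁k₂}(t₀, t_i,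 t_j). -/

import Mathlib

open MeasureTheory Polynomial Filter Real Set

lemma tendsto_poly_exp (P : ℝ[X]) {b : ℝ} (hb : 0 < b) :
    Tendsto (fun t => P.eval t * Real.exp (-(b * t))) atTop (nhds 0) := by
  have key : ∀ n : ℕ, Tendsto (fun t : ℝ => t ^ n * Real.exp (-(b * t))) atTop (nhds 0) := by
    intro n
    have h1 : Tendsto (fun y : ℝ => y ^ n * Real.exp (-y)) atTop (nhds 0) :=
      tendsto_pow_mul_exp_neg_atTop_nhds_zero n
    have h2 : Tendsto (fun t : ℝ => b * t) atTop atTop :=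
      tendsto_id.const_mul_atTop hb
    have h3 := (h1.comp h2).const_mul ((1 : ℝ) / b ^ n)
    rw [mul_zero] at h3
    refine h3.congr fun t => ?_
    simp only [Function.comp_apply]
    field_simp
    ring
  have heq : (fun t => P.eval t * Real.exp (-(b * t))) =
      fun t => ∑ i ∈ Finset.range (P.natDegree + 1), P.coeff i * (t ^ i * Real.exp (-(b * t))) := by
    funext t
    rw [Polynomial.eval_eq_sum_range, Finset.sum_mul]
    exact Finset.sum_congr rfl fun i _ => by ring
  rw [heq]
  have := tendsto_finset_sum (Finset.range (P.natDegree + 1))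
    (fun i _ => ((key i).const_mul (P.coeff i)))
  simpa using this

lemma integrableOn_poly_exp (P : ℝ[X]) {b : ℝ} (hb : 0 < b) (a : ℝ) :
    IntegrableOn (fun t => P.eval t * Real.exp (-(b * t))) (Set.Ioi a) := by
  apply integrable_of_isBigO_exp_neg (half_pos hb)
  · exact (P.continuous_aeval.mul (by continuity)).continuousOn
  · have h0 : Tendsto (fun t => P.eval t * Real.exp (-(b / 2 * t))) atTop (nhds 0) :=
      tendsto_poly_exp P (half_pos hb)
    have h1 := (h0.isBigO_one ℝ).mul
      (Asymptotics.isBigO_refl (fun t : ℝ => Real.exp (-(b / 2) * t)) atTop)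
    refine (h1.congr (fun t => ?_) (fun t => rfl)).congr' (EventuallyEq.refl _ _) ?_
    · rw [mul_assoc, ← Real.exp_add]; ring_nf
    · filter_upwards with x; rw [one_mul]

lemma integral_poly_exp (P : ℝ[X]) {b : ℝ} (hb : 0 < b) (a : ℝ) (n : ℕ) (hn : P.natDegree ≤ n) :
    ∫ t in Set.Ioi a, P.eval t * Real.exp (-(b * t)) =
      Real.exp (-(b * a)) *
        ∑ k ∈ Finset.range (n + 1), (1 / b) ^ (k + 1) * (derivative^[k] P).eval a := by
  set F : ℝ → ℝ := fun t => -(Real.exp (-(b * t)) *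
      ∑ k ∈ Finset.range (n + 1), (1 / b) ^ (k + 1) * (derivative^[k] P).eval t) with hF
  have hzero : derivative^[n + 1] P = 0 :=
    Polynomial.iterate_derivative_eq_zero (Nat.lt_succ_of_le hn)
  have hder : ∀ t : ℝ, HasDerivAt F (P.eval t * Real.exp (-(b * t))) t := by
    intro t
    have hE : HasDerivAt (fun t : ℝ => Real.exp (-(b * t))) (Real.exp (-(b * t)) * (-b)) t :=
      by simpa using (((hasDerivAt_id t).const_mul b).neg).exp
    have hS : HasDerivAt (fun t : ℝ => ∑ k ∈ Finset.range (n + 1),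
        (1 / b) ^ (k + 1) * (derivative^[k] P).eval t)
        (∑ k ∈ Finset.range (n + 1), (1 / b) ^ (k + 1) * (derivative^[k + 1] P).eval t) t := by
      apply HasDerivAt.fun_sum
      intro k _
      have := ((derivative^[k] P).hasDerivAt t).const_mul ((1 / b : ℝ) ^ (k + 1))
      rwa [← Function.iterate_succ_apply' derivative k P] at this
    have hprod := (hE.mul hS).neg
    have key : b * (∑ k ∈ Finset.range (n + 1), (1 / b) ^ (k + 1) * (derivative^[k] P).eval t)
        - (∑ k ∈ Finset.range (n + 1), (1 / b) ^ (k + 1) * (derivative^[k + 1] P).eval t)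
        = P.eval t := by
      rw [Finset.mul_sum]
      have hcongr : ∀ k ∈ Finset.range (n + 1),
          b * ((1 / b) ^ (k + 1) * (derivative^[k] P).eval t)
            = (1 / b) ^ k * (derivative^[k] P).eval t := by
        intro k _
        rw [one_div, pow_succ, mul_comm (b⁻¹ ^ k) b⁻¹, mul_assoc b⁻¹, ← mul_assoc b,
          mul_inv_cancel₀ hb.ne', one_mul]
      rw [Finset.sum_congr rfl hcongr, ← Finset.sum_sub_distrib]
      have htel := Finset.sum_range_sub'
        (fun k => (1 / b) ^ k * (derivative^[k] P).eval t) (n + 1)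
      rw [htel, hzero]
      simp
    refine hprod.congr_deriv ?_
    linear_combination (Real.exp (-(b * t))) * key
  have htends : Tendsto F atTop (nhds 0) := by
    set R : ℝ[X] := ∑ k ∈ Finset.range (n + 1),
      Polynomial.C ((1 / b) ^ (k + 1)) * derivative^[k] P with hR
    have hFeq : F = fun t => -(R.eval t * Real.exp (-(b * t))) := by
      funext t
      simp only [hF, hR, Polynomial.eval_finset_sum, Polynomial.eval_mul, Polynomial.eval_C]
      ring
    rw [hFeq]
    simpa using (tendsto_poly_exp R hb).neg
  have := integral_Ioi_of_hasDerivAt_of_tendsto' (f := F)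
    (fun x _ => hder x) (integrableOn_poly_exp P hb a) htends
  rw [this, hF]
  ring
theorem stmt_14 (p : ℕ) (l : ℝ) (hl : 0 < l)
    (kT : ℝ → ℝ)
    (hkT : ∀ t : ℝ, 0 ≤ t → kT t =
      Real.exp (-(Real.sqrt (2 * (p : ℝ) + 1) * t / l)) *
        ((p.factorial : ℝ) / ((2 * p).factorial : ℝ)) *
        ∑ k ∈ Finset.range (p + 1),
          (((p + k).factorial : ℝ) / ((k.factorial : ℝ) * ((p - k).factorial : ℝ))) *
            (2 * Real.sqrt (2 * (p : ℝ) + 1) * t / l) ^ (p - k))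
    (t0 ti tj : ℝ) (h0i : ti ≤ t0) (h0j : tj ≤ t0) :
    (∫ t in Set.Ioi (t0 - ti), kT t * kT (t + ti - tj))
      = ∑ k1 ∈ Finset.range (p + 1), ∑ k2 ∈ Finset.range (p + 1),
          (((p.factorial : ℝ) / ((2 * p).factorial : ℝ)) ^ 2 *
              ((((p + k1).factorial : ℝ) * ((p + k2).factorial : ℝ)) /
                ((k1.factorial : ℝ) * (k2.factorial : ℝ) *
                  ((p - k1).factorial : ℝ) * ((p - k2).factorial : ℝ))) *
              (2 * Real.sqrt (2 * (p : ℝ) + 1) / l) ^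
                (2 * (p : ℤ) - (k1 : ℤ) - (k2 : ℤ) - 1)) *
            Real.exp (-(Real.sqrt (2 * (p : ℝ) + 1) * (2 * t0 - ti - tj) / l)) *
            (∑ k3 ∈ Finset.range (2 * p - k1 - k2 + 1),
              (l / (2 * Real.sqrt (2 * (p : ℝ) + 1))) ^ k3 *
                (derivative^[k3]
                  ((X : ℝ[X]) ^ (p - k1) * ((X : ℝ[X]) + C (ti - tj)) ^ (p - k2))).eval
                  (t0 - ti)) := by
  set s : ℝ := Real.sqrt (2 * (p : ℝ) + 1) with hs_def
  have hs : 0 < s := Real.sqrt_pos.mpr (by positivity)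
  have hl' : l ≠ 0 := hl.ne'
  set b : ℝ := 2 * s / l with hb_def
  have hb : 0 < b := by positivity
  set A : ℝ := (p.factorial : ℝ) / ((2 * p).factorial : ℝ) with hA_def
  set a : ℝ := t0 - ti with ha_def
  set Q : ℕ → ℕ → ℝ[X] := fun k1 k2 =>
    (X : ℝ[X]) ^ (p - k1) * ((X : ℝ[X]) + C (ti - tj)) ^ (p - k2) with hQ_def
  set c : ℕ → ℝ := fun k =>
    ((p + k).factorial : ℝ) / ((k.factorial : ℝ) * ((p - k).factorial : ℝ)) with hc_def
  set K : ℕ → ℕ → ℝ := fun k1 k2 =>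
    A ^ 2 * (c k1 * c k2) * (2 * s / l) ^ (p - k1) * (2 * s / l) ^ (p - k2) *
      Real.exp (-(s * (ti - tj) / l)) with hK_def
  -- Step 1: pointwise identity on the integration domain
  have hpt : Set.EqOn (fun t => kT t * kT (t + ti - tj))
      (fun t => ∑ k1 ∈ Finset.range (p + 1), ∑ k2 ∈ Finset.range (p + 1),
        K k1 k2 * ((Q k1 k2).eval t * Real.exp (-(b * t)))) (Set.Ioi a) := by
    intro t ht
    have ht1 : (0 : ℝ) ≤ t := le_trans (by simp [ha_def]; linarith) (le_of_lt ht)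
    have ht2 : (0 : ℝ) ≤ t + ti - tj := by
      have : a < t := ht
      simp only [ha_def] at this
      linarith
    simp only
    rw [hkT t ht1, hkT _ ht2, Finset.mul_sum, Finset.mul_sum, Finset.sum_mul_sum]
    refine Finset.sum_congr rfl fun k1 _ => Finset.sum_congr rfl fun k2 _ => ?_
    have hexp : Real.exp (-(s * t / l)) * Real.exp (-(s * (t + ti - tj) / l))
        = Real.exp (-(s * (ti - tj) / l)) * Real.exp (-(b * t)) := by
      rw [← Real.exp_add, ← Real.exp_add]
      congr 1
      rw [hb_def]
      field_simp
      ring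
    simp only [hK_def, hQ_def, Polynomial.eval_mul, Polynomial.eval_pow,
      Polynomial.eval_add, Polynomial.eval_X, Polynomial.eval_C]
    rw [show (2 * s * t / l : ℝ) = (2 * s / l) * t from by ring,
      show (2 * s * (t + ti - tj) / l : ℝ) = (2 * s / l) * (t + (ti - tj)) from by ring,
      mul_pow, mul_pow]
    linear_combination
      (A ^ 2 * c k1 * c k2 * ((2 * s / l) ^ (p - k1) * t ^ (p - k1)) *
        ((2 * s / l) ^ (p - k2) * (t + (ti - tj)) ^ (p - k2))) * hexp
  rw [setIntegral_congr_fun measurableSet_Ioi hpt]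
  -- Step 2: swap integral and sums
  have hint : ∀ k1 k2 : ℕ, IntegrableOn
      (fun t => K k1 k2 * ((Q k1 k2).eval t * Real.exp (-(b * t)))) (Set.Ioi a) :=
    fun k1 k2 => (integrableOn_poly_exp (Q k1 k2) hb a).const_mul _
  rw [integral_finset_sum _ (fun k1 _ => integrable_finset_sum _ (fun k2 _ => hint k1 k2))]
  refine Finset.sum_congr rfl fun k1 hk1 => ?_
  rw [integral_finset_sum _ (fun k2 _ => hint k1 k2)]
  refine Finset.sum_congr rfl fun k2 hk2 => ?_
  have hk1p : k1 ≤ p := Nat.lt_succ_iff.mp (Finset.mem_range.mp hk1)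
  have hk2p : k2 ≤ p := Nat.lt_succ_iff.mp (Finset.mem_range.mp hk2)
  rw [MeasureTheory.integral_const_mul]
  have hdeg : (Q k1 k2).natDegree ≤ 2 * p - k1 - k2 := by
    refine le_trans (Polynomial.natDegree_mul_le) ?_
    rw [Polynomial.natDegree_X_pow, Polynomial.natDegree_pow, Polynomial.natDegree_X_add_C]
    omega
  rw [integral_poly_exp (Q k1 k2) hb a (2 * p - k1 - k2) hdeg]
  -- Step 3: match constants
  have hx : (2 * s / l : ℝ) ≠ 0 := by positivity
  have hzpow : (2 * s / l : ℝ) ^ (2 * (p : ℤ) - (k1 : ℤ) - (k2 : ℤ) - 1)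
      = (2 * s / l) ^ (2 * p - k1 - k2) * (l / (2 * s)) := by
    have hcast : (2 * (p : ℤ) - (k1 : ℤ) - (k2 : ℤ) - 1)
        = ((2 * p - k1 - k2 : ℕ) : ℤ) - 1 := by omega
    rw [hcast, zpow_sub_one₀ hx, zpow_natCast, inv_div]
  have hexp2 : Real.exp (-(s * (ti - tj) / l)) * Real.exp (-(b * a))
      = Real.exp (-(s * (2 * t0 - ti - tj) / l)) := by
    rw [← Real.exp_add]
    congr 1
    rw [hb_def, ha_def]
    field_simp
    ring
  have h1b : (1 / b : ℝ) = l / (2 * s) := by rw [hb_def, one_div, inv_div]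
  have hsum : ∑ k3 ∈ Finset.range (2 * p - k1 - k2 + 1),
      (1 / b) ^ (k3 + 1) * (derivative^[k3] (Q k1 k2)).eval a
      = (l / (2 * s)) * ∑ k3 ∈ Finset.range (2 * p - k1 - k2 + 1),
        (l / (2 * s)) ^ k3 * (derivative^[k3] (Q k1 k2)).eval a := by
    rw [Finset.mul_sum]
    refine Finset.sum_congr rfl fun k3 _ => ?_
    rw [h1b, pow_succ']
    ring
  have hpow : (2 * s / l : ℝ) ^ (p - k1) * (2 * s / l) ^ (p - k2)
      = (2 * s / l) ^ (2 * p - k1 - k2) := by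
    rw [← pow_add]
    congr 1
    omega
  rw [hsum, hzpow]
  simp only [hK_def, hA_def, hc_def, hQ_def]
  rw [show (A ^ 2 * (c k1 * c k2) * (2 * s / l) ^ (p - k1) * (2 * s / l) ^ (p - k2) *
      Real.exp (-(s * (ti - tj) / l)))
      = (A ^ 2 * (c k1 * c k2) * (2 * s / l) ^ (2 * p - k1 - k2)) *
        Real.exp (-(s * (ti - tj) / l)) from by rw [← hpow]; ring]
  rw [← hA_def]
  have hfr : c k1 * c k2 = ((p + k1).factorial : ℝ) * ((p + k2).factorial : ℝ) /
      ((k1.factorial : ℝ) * (k2.factorial : ℝ) * ((p - k1).factorial : ℝ) *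
        ((p - k2).factorial : ℝ)) := by
    simp only [hc_def]
    ring
  set S : ℝ := ∑ k3 ∈ Finset.range (2 * p - k1 - k2 + 1),
    (l / (2 * s)) ^ k3 *
      (derivative^[k3] ((X : ℝ[X]) ^ (p - k1) * ((X : ℝ[X]) + C (ti - tj)) ^ (p - k2))).eval a
    with hS_def
  linear_combination
    (A ^ 2 * (c k1 * c k2) * (2 * s / l) ^ (2 * p - k1 - k2) * (l / (2 * s)) * S) * hexp2 +
    (A ^ 2 * Real.exp (-(s * (2 * t0 - ti - tj) / l)) * (2 * s / l) ^ (2 * p - k1 - k2) *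
      (l / (2 * s)) * S) * hfr
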